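/- Let Q, H ∈ {0,1}^{m×n} with columns partitioned as [n] = L ∪ X. Then bases(Q_{:,L∪x}) = bases(H_{:,L∪x}) holds for every subset x ⊆ X if and only if bases(Q_{:,L}) = bases(H_{:,L}) and bases(Q_{:,L∪{Xᵢ}}) = bases(H_{:,L∪{Xᵢ}}) for every singleton Xᵢ ∈ X. -/

import Mathlib

open Classical

/-- Independence in the transversal matroid of a binary matrix `Q` (rows as
ground set): `Z` is matchable injectively into the columns via `1`-entries. -/
def TIndep {α β : Type*} (Q : α → β → Bool) (Z : Finset α) : Prop :=
  ∃ φ : α → β, Set.InjOn φ Z ∧ ∀ z ∈ Z, Q z (φ z) = true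

/-- Bases of the transversal matroid of `Q`: the maximal independent row sets. -/
def TBases {α β : Type*} (Q : α → β → Bool) : Set (Finset α) :=
  {B | TIndep Q B ∧ ∀ B', TIndep Q B' → B ⊆ B' → B = B'}

/-- Restriction of `Q` to the columns in `S` (other columns zeroed out). -/
def restrictCols {α β : Type*} [DecidableEq β] (Q : α → β → Bool)
    (S : Finset β) : α → β → Bool :=
  fun i j => if j ∈ S then Q i j else false

namespace TvAux

set_option linter.unusedSectionVars false

variable {α β : Type*} [Fintype α] [Fintype β] [DecidableEq α] [DecidableEq β]

lemma rc_eq_true {Q : α → β → Bool} {S : Finset β} {a : α} {j : β} :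
    restrictCols Q S a j = true ↔ j ∈ S ∧ Q a j = true := by
  unfold restrictCols
  split_ifs with h <;> simp [h]

lemma tindep_subset {M : α → β → Bool} {Z Y : Finset α} (h : TIndep M Z) (hYZ : Y ⊆ Z) :
    TIndep M Y := by
  obtain ⟨φ, h1, h2⟩ := h
  exact ⟨φ, h1.mono (by exact_mod_cast hYZ), fun z hz => h2 z (hYZ hz)⟩

lemma tindep_empty {M : α → β → Bool} (f₀ : α → β) : TIndep M (∅ : Finset α) :=
  ⟨f₀, by simp [Set.InjOn], by simp⟩

/-- neighbors of a row set -/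
noncomputable def nb (M : α → β → Bool) (A : Finset α) : Finset β :=
  Finset.univ.filter (fun j => ∃ a ∈ A, M a j = true)

lemma mem_nb {M : α → β → Bool} {A : Finset α} {j : β} :
    j ∈ nb M A ↔ ∃ a ∈ A, M a j = true := by
  simp [nb]

lemma nb_mono {M : α → β → Bool} {A B : Finset α} (h : A ⊆ B) : nb M A ⊆ nb M B := by
  intro j hj
  rw [mem_nb] at hj ⊢
  obtain ⟨a, ha, hMa⟩ := hj
  exact ⟨a, h ha, hMa⟩

lemma nb_union {M : α → β → Bool} {A B : Finset α} : nb M (A ∪ B) = nb M A ∪ nb M B := by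
  ext j
  simp only [mem_nb, Finset.mem_union]
  constructor
  · rintro ⟨a, ha | ha, hMa⟩
    · exact Or.inl ⟨a, ha, hMa⟩
    · exact Or.inr ⟨a, ha, hMa⟩
  · rintro (⟨a, ha, hMa⟩ | ⟨a, ha, hMa⟩)
    · exact ⟨a, Or.inl ha, hMa⟩
    · exact ⟨a, Or.inr ha, hMa⟩

lemma nb_inter_subset {M : α → β → Bool} {A B : Finset α} :
    nb M (A ∩ B) ⊆ nb M A ∩ nb M B := by
  intro j hj
  rw [Finset.mem_inter]
  rw [mem_nb] at hj
  obtain ⟨a, ha, hMa⟩ := hj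
  rw [Finset.mem_inter] at ha
  exact ⟨mem_nb.mpr ⟨a, ha.1, hMa⟩, mem_nb.mpr ⟨a, ha.2, hMa⟩⟩

lemma card_le_card_nb {M : α → β → Bool} {W : Finset α} (h : TIndep M W) :
    W.card ≤ (nb M W).card := by
  obtain ⟨φ, h1, h2⟩ := h
  apply Finset.card_le_card_of_injOn φ
  · intro a ha
    exact mem_nb.mpr ⟨a, ha, h2 a ha⟩
  · exact fun a ha b hb => h1 ha hb

/-- Hall's theorem, hard direction, for `TIndep`. -/
lemma hall_hard {M : α → β → Bool} (f₀ : α → β) {Z : Finset α}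
    (h : ∀ A ⊆ Z, A.card ≤ (nb M A).card) : TIndep M Z := by
  have key : ∀ s : Finset {x // x ∈ Z}, s.card ≤
      (s.biUnion (fun x => Finset.univ.filter (fun j => M x.1 j = true))).card := by
    intro s
    set A : Finset α := s.image Subtype.val with hA
    have hcard : A.card = s.card := Finset.card_image_of_injective _ Subtype.val_injective
    have hAZ : A ⊆ Z := by
      intro a ha
      rw [hA, Finset.mem_image] at ha
      obtain ⟨x, _, rfl⟩ := ha
      exact x.2
    have hsub : nb M A ⊆ s.biUnion (fun x => Finset.univ.filter (fun j => M x.1 j = true)) := by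
      intro j hj
      rw [mem_nb] at hj
      obtain ⟨a, ha, hMa⟩ := hj
      rw [hA, Finset.mem_image] at ha
      obtain ⟨x, hx, rfl⟩ := ha
      exact Finset.mem_biUnion.mpr ⟨x, hx, by simp [hMa]⟩
    calc s.card = A.card := hcard.symm
      _ ≤ (nb M A).card := h A hAZ
      _ ≤ _ := Finset.card_le_card hsub
  obtain ⟨f, hfinj, hf⟩ :=
    (Finset.all_card_le_biUnion_card_iff_exists_injective
      (fun x : {x // x ∈ Z} => Finset.univ.filter (fun j => M x.1 j = true))).mp key
  refine ⟨fun a => if h : a ∈ Z then f ⟨a, h⟩ else f₀ a, ?_, ?_⟩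
  · intro a ha b hb hab
    simp only [Finset.mem_coe] at ha hb
    have hab' : f ⟨a, ha⟩ = f ⟨b, hb⟩ := by simpa [dif_pos ha, dif_pos hb] using hab
    have := hfinj hab'
    exact congrArg Subtype.val this
  · intro z hz
    have := hf ⟨z, hz⟩
    simp only [Finset.mem_filter] at this
    simpa [dif_pos hz] using this.2

lemma exists_violator {M : α → β → Bool} (f₀ : α → β) {Z : Finset α}
    (h : ¬ TIndep M Z) : ∃ A ⊆ Z, (nb M A).card < A.card := by
  by_contra hc
  push_neg at hc
  exact h (hall_hard f₀ (fun A hA => hc A hA))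

/-- rank: maximum size of an independent subset -/
noncomputable def rk (M : α → β → Bool) (Z : Finset α) : ℕ :=
  Z.powerset.sup (fun W => if TIndep M W then W.card else 0)

lemma card_le_rk {M : α → β → Bool} {W Z : Finset α} (hWZ : W ⊆ Z) (h : TIndep M W) :
    W.card ≤ rk M Z := by
  have := Finset.le_sup (f := fun W => if TIndep M W then W.card else 0)
      (Finset.mem_powerset.mpr hWZ)
  simp only [if_pos h] at this; exact this

lemma exists_rk_set (M : α → β → Bool) (f₀ : α → β) (Z : Finset α) :
    ∃ W, W ⊆ Z ∧ TIndep M W ∧ W.card = rk M Z := by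
  obtain ⟨W, hW, hEq⟩ := Finset.exists_mem_eq_sup Z.powerset
      ⟨∅, Finset.empty_mem_powerset _⟩ (fun W => if TIndep M W then W.card else 0)
  by_cases h : TIndep M W
  · exact ⟨W, Finset.mem_powerset.mp hW, h, by rw [rk, hEq, if_pos h]⟩
  · refine ⟨∅, Finset.empty_subset _, tindep_empty f₀, ?_⟩
    rw [Finset.card_empty, rk, hEq, if_neg h]

lemma rk_mono {M : α → β → Bool} {Y Z : Finset α} (h : Y ⊆ Z) : rk M Y ≤ rk M Z :=
  Finset.sup_mono (Finset.powerset_mono.mpr h)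

lemma rk_le_card_nb {M : α → β → Bool} {Z : Finset α} : rk M Z ≤ (nb M Z).card := by
  apply Finset.sup_le
  intro W hW
  split_ifs with h
  · exact le_trans (card_le_card_nb h) (Finset.card_le_card (nb_mono (Finset.mem_powerset.mp hW)))
  · exact Nat.zero_le _

/-- The fundamental circuit: if `Z.erase z` is independent but `Z` is not, then the
set `C` of elements whose removal restores independence is the unique circuit of `Z`. -/
lemma circuit_facts (M : α → β → Bool) (f₀ : α → β) {Z : Finset α} {z : α}
    (hz : z ∈ Z) (hzi : TIndep M (Z.erase z)) (hZ : ¬ TIndep M Z)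
    (C : Finset α) (hC : C = Z.filter (fun w => TIndep M (Z.erase w))) :
    z ∈ C ∧ (∀ w ∈ C, TIndep M (C.erase w)) ∧ ¬ TIndep M C ∧
      (nb M C).card + 1 = C.card := by
  have hCZ : C ⊆ Z := hC ▸ Finset.filter_subset _ _
  have hzC : z ∈ C := by rw [hC, Finset.mem_filter]; exact ⟨hz, hzi⟩
  have hmemC : ∀ w ∈ C, TIndep M (Z.erase w) := by
    intro w hw
    rw [hC, Finset.mem_filter] at hw
    exact hw.2
  have herase : ∀ w ∈ C, TIndep M (C.erase w) := by
    intro w hw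
    exact tindep_subset (hmemC w hw) (Finset.erase_subset_erase _ hCZ)
  -- deficiency is at most one for any subset of Z
  have defic_le : ∀ B ⊆ Z, B.card ≤ (nb M B).card + 1 := by
    intro B hB
    have h1 : B ⊆ insert z (B.erase z) := by
      intro x hx
      by_cases hxz : x = z
      · exact hxz ▸ Finset.mem_insert_self _ _
      · exact Finset.mem_insert_of_mem (Finset.mem_erase.mpr ⟨hxz, hx⟩)
    have h2 : (B.erase z).card ≤ (nb M (B.erase z)).card :=
      card_le_card_nb (tindep_subset hzi (Finset.erase_subset_erase _ hB))
    have h3 : (nb M (B.erase z)).card ≤ (nb M B).card :=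
      Finset.card_le_card (nb_mono (Finset.erase_subset _ _))
    calc B.card ≤ (insert z (B.erase z)).card := Finset.card_le_card h1
      _ ≤ (B.erase z).card + 1 := Finset.card_insert_le _ _
      _ ≤ (nb M B).card + 1 := by omega
  -- a minimum-cardinality Hall violator
  have hVne : ∃ A ∈ (Z.powerset.filter (fun A => (nb M A).card < A.card)), True := by
    obtain ⟨A, hA1, hA2⟩ := exists_violator f₀ hZ
    exact ⟨A, Finset.mem_filter.mpr ⟨Finset.mem_powerset.mpr hA1, hA2⟩, trivial⟩
  obtain ⟨A, hAmem, hAmin⟩ := Finset.exists_min_image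
      (Z.powerset.filter (fun A => (nb M A).card < A.card)) Finset.card
      (by obtain ⟨A, hA, _⟩ := hVne; exact ⟨A, hA⟩)
  rw [Finset.mem_filter, Finset.mem_powerset] at hAmem
  obtain ⟨hAZ, hAvio⟩ := hAmem
  -- C ⊆ A
  have hCA : C ⊆ A := by
    intro w hw
    by_contra hwA
    have hsub : A ⊆ Z.erase w := by
      intro a ha
      exact Finset.mem_erase.mpr ⟨fun h => hwA (h ▸ ha), hAZ ha⟩
    have := card_le_card_nb (tindep_subset (hmemC w hw) hsub)
    omega
  -- A ⊆ C
  have hAC : A ⊆ C := by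
    intro w hwA
    rw [hC, Finset.mem_filter]
    refine ⟨hAZ hwA, ?_⟩
    apply hall_hard f₀
    intro A' hA'
    by_contra hlt
    push_neg at hlt
    have hA'Z : A' ⊆ Z := hA'.trans (Finset.erase_subset _ _)
    have hwA' : w ∉ A' := fun h => (Finset.mem_erase.mp (hA' h)).1 rfl
    -- A ∩ A' is a proper subset of A, hence not a violator
    have hproper : (A ∩ A').card < A.card := by
      apply Finset.card_lt_card
      constructor
      · exact Finset.inter_subset_left
      · intro hsub
        exact hwA' (Finset.mem_inter.mp (hsub hwA)).2
    have hnotvio : (A ∩ A').card ≤ (nb M (A ∩ A')).card := by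
      by_contra hc
      push_neg at hc
      have := hAmin (A ∩ A') (Finset.mem_filter.mpr
        ⟨Finset.mem_powerset.mpr (Finset.inter_subset_left.trans hAZ), hc⟩)
      omega
    have hU : (A ∪ A').card ≤ (nb M (A ∪ A')).card + 1 :=
      defic_le _ (Finset.union_subset hAZ hA'Z)
    have hnbu : nb M (A ∪ A') = nb M A ∪ nb M A' := nb_union
    have h3 : (nb M A ∪ nb M A').card + (nb M A ∩ nb M A').card
        = (nb M A).card + (nb M A').card := Finset.card_union_add_card_inter _ _
    have h4 : (nb M (A ∩ A')).card ≤ (nb M A ∩ nb M A').card :=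
      Finset.card_le_card nb_inter_subset
    have h5 : (A ∪ A').card + (A ∩ A').card = A.card + A'.card :=
      Finset.card_union_add_card_inter _ _
    rw [hnbu] at hU
    omega
  have hCeqA : C = A := Finset.Subset.antisymm hCA hAC
  have hCdep : ¬ TIndep M C := by
    intro h
    have := card_le_card_nb h
    rw [hCeqA] at this
    omega
  have hcard : (nb M C).card + 1 = C.card := by
    have hle : (nb M C).card + 1 ≤ C.card := by rw [hCeqA]; omega
    have hge : C.card ≤ (nb M C).card + 1 := defic_le _ hCZ
    omega
  exact ⟨hzC, herase, hCdep, hcard⟩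

/-- Key counting lemma: in a circuit `C` of the transversal matroid on columns `L ∪ s`,
no element is a coloop with respect to the columns `L` alone. -/
lemma rk_erase_eq (Q : α → β → Bool) (L s : Finset β) (hLs : Disjoint L s)
    {C : Finset α} {z : α} (hzC : z ∈ C)
    (h1 : TIndep (restrictCols Q (L ∪ s)) (C.erase z))
    (h3 : (nb (restrictCols Q (L ∪ s)) C).card + 1 = C.card) :
    rk (restrictCols Q L) (C.erase z) = rk (restrictCols Q L) C := by
  set M0 := restrictCols Q L with hM0
  set MX := restrictCols Q s with hMX
  set Ms := restrictCols Q (L ∪ s) with hMs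
  -- split the neighborhood
  have hsplit : nb Ms C = nb M0 C ∪ nb MX C := by
    ext j
    simp only [mem_nb, Finset.mem_union, hM0, hMX, hMs, rc_eq_true, Finset.mem_union]
    constructor
    · rintro ⟨a, ha, hj | hj, hQ⟩
      · exact Or.inl ⟨a, ha, hj, hQ⟩
      · exact Or.inr ⟨a, ha, hj, hQ⟩
    · rintro (⟨a, ha, hj, hQ⟩ | ⟨a, ha, hj, hQ⟩)
      · exact ⟨a, ha, Or.inl hj, hQ⟩
      · exact ⟨a, ha, Or.inr hj, hQ⟩
  have hnb0L : nb M0 C ⊆ L := by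
    intro j hj
    rw [mem_nb] at hj
    obtain ⟨a, _, hQ⟩ := hj
    rw [hM0, rc_eq_true] at hQ
    exact hQ.1
  have hnbXs : nb MX C ⊆ s := by
    intro j hj
    rw [mem_nb] at hj
    obtain ⟨a, _, hQ⟩ := hj
    rw [hMX, rc_eq_true] at hQ
    exact hQ.1
  have hdisj : Disjoint (nb M0 C) (nb MX C) := hLs.mono hnb0L hnbXs
  have hcards : (nb M0 C).card + (nb MX C).card + 1 = C.card := by
    rw [← h3, hsplit, Finset.card_union_of_disjoint hdisj]
  -- split the matching of C.erase z
  obtain ⟨ψ, hψinj, hψ⟩ := h1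
  set U := C.erase z with hU
  set U₁ := U.filter (fun u => ψ u ∈ L) with hU₁
  set U₂ := U.filter (fun u => ¬ (ψ u ∈ L)) with hU₂
  have hUcard : U₁.card + U₂.card = U.card :=
    Finset.card_filter_add_card_filter_not _
  have hU₁ind : TIndep M0 U₁ := by
    refine ⟨ψ, hψinj.mono ?_, ?_⟩
    · exact_mod_cast Finset.filter_subset _ _
    · intro u hu
      rw [Finset.mem_filter] at hu
      have := hψ u hu.1
      rw [hMs, rc_eq_true] at this
      rw [hM0, rc_eq_true]
      exact ⟨hu.2, this.2⟩
  have hU₁le : U₁.card ≤ rk M0 U := card_le_rk (Finset.filter_subset _ _) hU₁ind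
  have hU₂le : U₂.card ≤ (nb MX C).card := by
    apply Finset.card_le_card_of_injOn ψ
    · intro u hu
      rw [Finset.mem_coe, Finset.mem_filter] at hu
      have := hψ u hu.1
      rw [hMs, rc_eq_true, Finset.mem_union] at this
      rw [Finset.mem_coe, mem_nb]
      refine ⟨u, Finset.mem_of_mem_erase hu.1, ?_⟩
      rw [hMX, rc_eq_true]
      rcases this.1 with h | h
      · exact absurd h hu.2
      · exact ⟨h, this.2⟩
    · exact fun a ha b hb =>
        hψinj (Finset.mem_coe.mpr (Finset.filter_subset _ _ ha))
          (Finset.mem_coe.mpr (Finset.filter_subset _ _ hb))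
  have hUc : U.card + 1 = C.card := Finset.card_erase_add_one hzC
  have hrkC : rk M0 C ≤ (nb M0 C).card := le_trans rk_le_card_nb (le_refl _)
  have hmono : rk M0 U ≤ rk M0 C := rk_mono (Finset.erase_subset _ _)
  -- rk M0 C ≤ |nb M0 C| ≤ rk M0 U
  have hge : (nb M0 C).card ≤ rk M0 U := by omega
  omega

/-- The core induction step. -/
lemma core (Q H : α → β → Bool) (L s : Finset β) {i : β}
    (hiL : i ∉ L) (his : i ∉ s) (hLs : Disjoint L s)
    (E0 : ∀ Z, TIndep (restrictCols Q L) Z ↔ TIndep (restrictCols H L) Z)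
    (E1 : ∀ Z, TIndep (restrictCols Q (insert i L)) Z ↔
      TIndep (restrictCols H (insert i L)) Z)
    (Es : ∀ Z, TIndep (restrictCols Q (L ∪ s)) Z ↔ TIndep (restrictCols H (L ∪ s)) Z)
    {Z : Finset α} (hQ : TIndep (restrictCols Q (insert i (L ∪ s))) Z) :
    TIndep (restrictCols H (insert i (L ∪ s))) Z := by
  obtain ⟨φ, hφinj, hφ⟩ := hQ
  have hiLs : i ∉ L ∪ s := by
    rw [Finset.mem_union]; rintro (h | h); exact hiL h; exact his h
  by_cases hqs : TIndep (restrictCols Q (L ∪ s)) Z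
  · obtain ⟨ψ, h1, h2⟩ := (Es Z).mp hqs
    refine ⟨ψ, h1, fun w hw => ?_⟩
    have := h2 w hw
    rw [rc_eq_true] at this ⊢
    exact ⟨Finset.mem_insert_of_mem this.1, this.2⟩
  · -- the matching must use column i
    have hex : ∃ z ∈ Z, φ z = i := by
      by_contra hno
      push_neg at hno
      apply hqs
      refine ⟨φ, hφinj, fun w hw => ?_⟩
      have := hφ w hw
      rw [rc_eq_true] at this ⊢
      refine ⟨?_, this.2⟩
      rcases Finset.mem_insert.mp this.1 with h' | h'
      · exact absurd h' (hno w hw)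
      · exact h'
    obtain ⟨z, hzZ, hφz⟩ := hex
    have hQzi : Q z i = true := by
      have := hφ z hzZ
      rw [hφz] at this
      rw [rc_eq_true] at this
      exact this.2
    have hzind : TIndep (restrictCols Q (L ∪ s)) (Z.erase z) := by
      refine ⟨φ, hφinj.mono (by exact_mod_cast Finset.erase_subset _ _), fun w hw => ?_⟩
      have hwZ := Finset.mem_of_mem_erase hw
      have := hφ w hwZ
      rw [rc_eq_true] at this ⊢
      refine ⟨?_, this.2⟩
      rcases Finset.mem_insert.mp this.1 with h' | h'
      · exfalso
        have : w = z := hφinj (Finset.mem_coe.mpr hwZ) (Finset.mem_coe.mpr hzZ)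
          (by rw [h', hφz])
        exact (Finset.mem_erase.mp hw).1 this
      · exact h'
    set M := restrictCols Q (L ∪ s) with hM
    set C := Z.filter (fun w => TIndep M (Z.erase w)) with hCdef
    obtain ⟨hzC, hCer, hCdep, hCcard⟩ := circuit_facts M φ hzZ hzind hqs C rfl
    have hCZ : C ⊆ Z := Finset.filter_subset _ _
    have h12 := rk_erase_eq Q L s hLs hzC (hCer z hzC) hCcard
    obtain ⟨I, hIsub, hIind, hIcard⟩ := exists_rk_set (restrictCols Q L) φ (C.erase z)
    have hzI : z ∉ I := fun h => (Finset.notMem_erase z C) (hIsub h)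
    set W := insert z I with hW
    have hWC : W ⊆ C := Finset.insert_subset hzC (hIsub.trans (Finset.erase_subset _ _))
    have hWcard : W.card = I.card + 1 := Finset.card_insert_of_notMem hzI
    have hWi : TIndep (restrictCols Q (insert i L)) W := by
      obtain ⟨ρ, hρinj, hρ⟩ := hIind
      have hρL : ∀ u ∈ I, ρ u ∈ L := by
        intro u hu
        have := hρ u hu
        rw [rc_eq_true] at this
        exact this.1
      refine ⟨Function.update ρ z i, ?_, ?_⟩
      · intro a ha b hb hab
        rw [hW] at ha hb
        simp only [Finset.coe_insert, Set.mem_insert_iff, Finset.mem_coe] at ha hb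
        rcases ha with rfl | ha <;> rcases hb with rfl | hb
        · rfl
        · rw [Function.update_self,
            Function.update_of_ne (show b ≠ a by intro hh; rw [hh] at hb; exact hzI hb)] at hab
          have hbl : ρ b ∈ L := hρL b hb
          rw [← hab] at hbl
          exact absurd hbl hiL
        · rw [Function.update_self,
            Function.update_of_ne (show a ≠ b by intro hh; rw [hh] at ha; exact hzI ha)] at hab
          have hal : ρ a ∈ L := hρL a ha
          rw [hab] at hal
          exact absurd hal hiL
        · rw [Function.update_of_ne (show a ≠ z by intro hh; rw [hh] at ha; exact hzI ha),
            Function.update_of_ne (show b ≠ z by intro hh; rw [hh] at hb; exact hzI hb)] at hab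
          exact hρinj (Finset.mem_coe.mpr ha) (Finset.mem_coe.mpr hb) hab
      · intro w hw0
        rw [hW] at hw0
        rcases Finset.mem_insert.mp hw0 with rfl | hwI
        · rw [Function.update_self, rc_eq_true]
          exact ⟨Finset.mem_insert_self _ _, hQzi⟩
        · rw [Function.update_of_ne (show w ≠ z by intro hh; rw [hh] at hwI; exact hzI hwI),
            rc_eq_true]
          have := hρ w hwI
          rw [rc_eq_true] at this
          exact ⟨Finset.mem_insert_of_mem this.1, this.2⟩
    have hWnot : ¬ TIndep (restrictCols Q L) W := by
      intro h
      have hle := card_le_rk hWC h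
      omega
    have hWiH : TIndep (restrictCols H (insert i L)) W := (E1 W).mp hWi
    have hWnotH : ¬ TIndep (restrictCols H L) W := fun h => hWnot ((E0 W).mpr h)
    have hwex : ∃ w ∈ W, H w i = true := by
      by_contra hno
      push_neg at hno
      obtain ⟨ρ, hρinj, hρ⟩ := hWiH
      apply hWnotH
      refine ⟨ρ, hρinj, fun w hw => ?_⟩
      have := hρ w hw
      rw [rc_eq_true] at this ⊢
      rcases Finset.mem_insert.mp this.1 with h' | h'
      · exfalso
        apply hno w hw
        rw [← h']
        exact this.2
      · exact ⟨h', this.2⟩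
    obtain ⟨w, hwW, hHwi⟩ := hwex
    have hwC : w ∈ C := hWC hwW
    have hwZ : w ∈ Z := hCZ hwC
    have hwZind : TIndep M (Z.erase w) := (Finset.mem_filter.mp hwC).2
    have hHind : TIndep (restrictCols H (L ∪ s)) (Z.erase w) := (Es _).mp hwZind
    obtain ⟨ρ, hρinj, hρ⟩ := hHind
    have hρLs : ∀ u ∈ Z.erase w, ρ u ∈ L ∪ s := by
      intro u hu
      have := hρ u hu
      rw [rc_eq_true] at this
      exact this.1
    refine ⟨Function.update ρ w i, ?_, ?_⟩
    · intro a ha b hb hab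
      simp only [Finset.mem_coe] at ha hb
      by_cases haw : a = w <;> by_cases hbw : b = w
      · rw [haw, hbw]
      · rw [haw, Function.update_self, Function.update_of_ne hbw] at hab
        have hbl : ρ b ∈ L ∪ s := hρLs b (Finset.mem_erase.mpr ⟨hbw, hb⟩)
        rw [← hab] at hbl
        exact absurd hbl hiLs
      · rw [hbw, Function.update_self, Function.update_of_ne haw] at hab
        have hal : ρ a ∈ L ∪ s := hρLs a (Finset.mem_erase.mpr ⟨haw, ha⟩)
        rw [hab] at hal
        exact absurd hal hiLs
      · rw [Function.update_of_ne haw, Function.update_of_ne hbw] at hab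
        exact hρinj (Finset.mem_coe.mpr (Finset.mem_erase.mpr ⟨haw, ha⟩))
          (Finset.mem_coe.mpr (Finset.mem_erase.mpr ⟨hbw, hb⟩)) hab
    · intro u hu
      by_cases huw : u = w
      · rw [huw, Function.update_self, rc_eq_true]
        exact ⟨Finset.mem_insert_self _ _, hHwi⟩
      · rw [Function.update_of_ne huw, rc_eq_true]
        have := hρ u (Finset.mem_erase.mpr ⟨huw, hu⟩)
        rw [rc_eq_true] at this
        exact ⟨Finset.mem_insert_of_mem this.1, this.2⟩

/-- every independent set extends to a basis -/
lemma exists_basis_superset {M : α → β → Bool} {Z : Finset α} (h : TIndep M Z) :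
    ∃ B ∈ TBases M, Z ⊆ B := by
  set T := Finset.univ.powerset.filter (fun B => Z ⊆ B ∧ TIndep M B) with hT
  have hZT : Z ∈ T := by
    rw [hT, Finset.mem_filter]
    exact ⟨Finset.mem_powerset.mpr (Finset.subset_univ _), Finset.Subset.refl _, h⟩
  obtain ⟨B, hBT, hmax⟩ := Finset.exists_max_image T Finset.card ⟨Z, hZT⟩
  rw [hT, Finset.mem_filter] at hBT
  refine ⟨B, ⟨hBT.2.2, fun B' hB' hsub => ?_⟩, hBT.2.1⟩
  have hB'T : B' ∈ T := by
    rw [hT, Finset.mem_filter]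
    exact ⟨Finset.mem_powerset.mpr (Finset.subset_univ _), hBT.2.1.trans hsub, hB'⟩
  exact Finset.eq_of_subset_of_card_le hsub (hmax B' hB'T)

lemma tindep_of_tbases_eq {M M' : α → β → Bool} (h : TBases M = TBases M')
    {Z : Finset α} (hZ : TIndep M Z) : TIndep M' Z := by
  obtain ⟨B, hB, hZB⟩ := exists_basis_superset hZ
  rw [h] at hB
  exact tindep_subset hB.1 hZB

lemma tbases_eq_of_tindep_iff {M M' : α → β → Bool}
    (h : ∀ Z, TIndep M Z ↔ TIndep M' Z) : TBases M = TBases M' := by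
  ext B
  simp only [TBases, Set.mem_setOf_eq]
  constructor
  · rintro ⟨h1, h2⟩
    exact ⟨(h B).mp h1, fun B' hB' hsub => h2 B' ((h B').mpr hB') hsub⟩
  · rintro ⟨h1, h2⟩
    exact ⟨(h B).mpr h1, fun B' hB' hsub => h2 B' ((h B').mp hB') hsub⟩

end TvAux

/-- **Reducing all union equivalence checks to singleton checks.**
With columns partitioned as `L ∪ X` (`X = Lᶜ`), the bases of `Q` and `H`
restricted to `L ∪ x` agree for every `x ⊆ X` iff they agree on `L` and on
`L ∪ {Xᵢ}` for every single `Xᵢ ∈ X`. -/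
theorem bases_all_unions_iff_singletons {α β : Type*} [Fintype α] [Fintype β]
    [DecidableEq α] [DecidableEq β] (Q H : α → β → Bool) (L : Finset β) :
    (∀ s ⊆ Lᶜ, TBases (restrictCols Q (L ∪ s)) = TBases (restrictCols H (L ∪ s))) ↔
      (TBases (restrictCols Q L) = TBases (restrictCols H L) ∧
        ∀ i ∈ Lᶜ, TBases (restrictCols Q (insert i L))
          = TBases (restrictCols H (insert i L))) := by
  constructor
  · intro h
    constructor
    · have := h ∅ (Finset.empty_subset _)
      rwa [Finset.union_empty] at this
    · intro i hi
      have := h {i} (Finset.singleton_subset_iff.mpr hi)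
      have he : L ∪ {i} = insert i L := by
        rw [Finset.union_comm, ← Finset.insert_eq]
      rwa [he] at this
  · rintro ⟨h0, h1⟩
    -- convert hypotheses to independence statements
    have E0 : ∀ Z, TIndep (restrictCols Q L) Z ↔ TIndep (restrictCols H L) Z :=
      fun Z => ⟨TvAux.tindep_of_tbases_eq h0, TvAux.tindep_of_tbases_eq h0.symm⟩
    have E1 : ∀ i ∈ Lᶜ, ∀ Z, TIndep (restrictCols Q (insert i L)) Z ↔
        TIndep (restrictCols H (insert i L)) Z :=
      fun i hi Z => ⟨TvAux.tindep_of_tbases_eq (h1 i hi),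
        TvAux.tindep_of_tbases_eq (h1 i hi).symm⟩
    have KEY : ∀ s : Finset β, s ⊆ Lᶜ → ∀ Z,
        TIndep (restrictCols Q (L ∪ s)) Z ↔ TIndep (restrictCols H (L ∪ s)) Z := by
      intro s
      induction s using Finset.induction_on with
      | empty =>
        intro _ Z
        rw [Finset.union_empty]
        exact E0 Z
      | @insert i s his ih =>
        intro hsub Z
        have hiC : i ∈ Lᶜ := hsub (Finset.mem_insert_self _ _)
        have hiL : i ∉ L := Finset.mem_compl.mp hiC
        have hsL : s ⊆ Lᶜ := fun x hx => hsub (Finset.mem_insert_of_mem hx)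
        have hLs : Disjoint L s := by
          rw [Finset.disjoint_left]
          intro a haL has
          exact Finset.mem_compl.mp (hsL has) haL
        have Es := ih hsL
        rw [Finset.union_insert]
        exact ⟨fun hQ => TvAux.core Q H L s hiL his hLs E0 (E1 i hiC) Es hQ,
          fun hH => TvAux.core H Q L s hiL his hLs
            (fun Z => (E0 Z).symm) (fun Z => (E1 i hiC Z).symm)
            (fun Z => (Es Z).symm) hH⟩
    intro s hs
    exact TvAux.tbases_eq_of_tindep_iff (KEY s hs)
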